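/- Let A, B be nonzero real numbers and let w be a real number with 0 < |w| < 1/(2√(|A·B|)). Then Σ_{i=0}^∞ c_i A^{i+1} B^i w^{2i+1} = (1 − √(1 − 4·A·B·w²))/(2·B·w). (Note that 1 − 4ABw² > 0 under the stated hypothesis, so the square root is the real square root.) -/

import Mathlib

open Finset

lemma succ_succ_mul_catalan (n : ℕ) :
    (n + 2) * catalan (n + 1) = 2 * (2 * n + 1) * catalan n := by
  have h1 := succ_mul_catalan_eq_centralBinom (n + 1)
  have h2 := Nat.succ_mul_centralBinom_succ n
  have h3 := succ_mul_catalan_eq_centralBinom n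
  have key : (n + 1) * ((n + 2) * catalan (n + 1)) =
      (n + 1) * (2 * (2 * n + 1) * catalan n) := by
    calc (n + 1) * ((n + 2) * catalan (n + 1)) = (n + 1) * Nat.centralBinom (n + 1) := by
            rw [← h1]
      _ = 2 * (2 * n + 1) * Nat.centralBinom n := h2
      _ = 2 * (2 * n + 1) * ((n + 1) * catalan n) := by rw [h3]
      _ = (n + 1) * (2 * (2 * n + 1) * catalan n) := by ring
  exact Nat.eq_of_mul_eq_mul_left (Nat.succ_pos n) key

lemma catalan_succ_le (n : ℕ) : catalan (n + 1) ≤ 4 * catalan n := by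
  have h := succ_succ_mul_catalan n
  have : (n + 2) * catalan (n + 1) ≤ (n + 2) * (4 * catalan n) := by
    rw [h]; nlinarith [Nat.zero_le (catalan n)]
  exact Nat.le_of_mul_le_mul_left this (by omega)

lemma catalan_le_four_pow (n : ℕ) : catalan n ≤ 4 ^ n := by
  induction n with
  | zero => simp
  | succ k ih =>
    calc catalan (k + 1) ≤ 4 * catalan k := catalan_succ_le k
      _ ≤ 4 * 4 ^ k := by omega
      _ = 4 ^ (k + 1) := by ring

lemma summable_catalan {x : ℝ} (hx : |x| < 1 / 4) :
    Summable (fun n => (catalan n : ℝ) * x ^ n) := by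
  apply Summable.of_norm_bounded (g := fun n => (4 * |x|) ^ n)
  · apply summable_geometric_of_lt_one (by positivity)
    nlinarith
  · intro n
    rw [norm_mul, norm_pow, mul_pow]
    rw [Real.norm_eq_abs, Real.norm_eq_abs, Nat.abs_cast]
    gcongr
    exact_mod_cast catalan_le_four_pow n

lemma catalan_partial_sum (N : ℕ) :
    ∑ n ∈ range N, (catalan n : ℝ) * (1 / 4) ^ n =
      2 * (1 - (Nat.centralBinom N : ℝ) / 4 ^ N) := by
  induction N with
  | zero => simp [Nat.centralBinom_zero]
  | succ k ih =>
    rw [Finset.sum_range_succ, ih]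
    have h1 : ((k : ℝ) + 1) * (catalan k : ℝ) = (Nat.centralBinom k : ℝ) := by
      exact_mod_cast succ_mul_catalan_eq_centralBinom k
    have h2 : ((k : ℝ) + 1) * (Nat.centralBinom (k + 1) : ℝ) =
        2 * (2 * k + 1) * (Nat.centralBinom k : ℝ) := by
      exact_mod_cast Nat.succ_mul_centralBinom_succ k
    have h4 : (4 : ℝ) ^ k ≠ 0 := by positivity
    have hk1 : ((k : ℝ) + 1) ≠ 0 := by positivity
    have e : ((k : ℝ) + 1) * (Nat.centralBinom (k + 1) : ℝ) =
        ((k : ℝ) + 1) * ((4 * k + 2) * (catalan k : ℝ)) := by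
      rw [h2, ← h1]; ring
    have hb' := mul_left_cancel₀ hk1 e
    have key0 : 4 * (catalan k : ℝ) =
        8 * (Nat.centralBinom k : ℝ) - 2 * (Nat.centralBinom (k + 1) : ℝ) := by
      linear_combination 8 * h1 + 2 * hb'
    have key : (catalan k : ℝ) * (1 / 4) ^ k =
        2 * (1 - (Nat.centralBinom (k + 1) : ℝ) / 4 ^ (k + 1)) -
          2 * (1 - (Nat.centralBinom k : ℝ) / 4 ^ k) := by
      have h4k : ((4 : ℝ) ^ k) ≠ 0 := by positivity
      have hcomm : ((Nat.centralBinom (1 + k) : ℝ)) = (Nat.centralBinom (k + 1) : ℝ) := by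
        rw [Nat.add_comm]
      field_simp
      ring_nf
      rw [hcomm]
      have hq : (1 / 4 : ℝ) ^ k * 4 ^ k = 1 := by rw [← mul_pow]; norm_num
      linear_combination ((4 : ℝ) ^ k) * key0 + 4 * (catalan k : ℝ) * (4 : ℝ) ^ k * hq
    rw [key]
    ring

lemma catalan_tsum_le_two {x : ℝ} (hx0 : 0 ≤ x) (hx : x ≤ 1 / 4) :
    ∑' n, (catalan n : ℝ) * x ^ n ≤ 2 := by
  apply Real.tsum_le_of_sum_range_le (fun n => by positivity)
  intro N
  calc ∑ n ∈ range N, (catalan n : ℝ) * x ^ n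
      ≤ ∑ n ∈ range N, (catalan n : ℝ) * (1 / 4) ^ n := by
        apply Finset.sum_le_sum
        intro i _
        gcongr
    _ = 2 * (1 - (Nat.centralBinom N : ℝ) / 4 ^ N) := catalan_partial_sum N
    _ ≤ 2 := by
        have : (0 : ℝ) ≤ (Nat.centralBinom N : ℝ) / 4 ^ N := by positivity
        nlinarith

lemma catalan_tsum_nonneg {x : ℝ} (hx : |x| < 1 / 4) (hxneg : x ≤ 0) :
    0 ≤ ∑' n, (catalan n : ℝ) * x ^ n := by
  have hs := summable_catalan hx
  have hinj1 : Function.Injective (fun k : ℕ => 2 * k) := fun a b h => by dsimp only at h; omega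
  have hinj2 : Function.Injective (fun k : ℕ => 2 * k + 1) := fun a b h => by dsimp only at h; omega
  have he : Summable (fun k => (catalan (2 * k) : ℝ) * x ^ (2 * k)) := by
    have h := hs.comp_injective hinj1
    simpa [Function.comp_def] using h
  have ho : Summable (fun k => (catalan (2 * k + 1) : ℝ) * x ^ (2 * k + 1)) := by
    have h := hs.comp_injective hinj2
    simpa [Function.comp_def] using h
  rw [← tsum_even_add_odd (f := fun n => (catalan n : ℝ) * x ^ n) he ho, ← Summable.tsum_add he ho]
  apply tsum_nonneg
  intro k
  have hle : (catalan (2 * k + 1) : ℝ) ≤ 4 * (catalan (2 * k) : ℝ) := by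
    exact_mod_cast catalan_succ_le (2 * k)
  have hxlb : -(1 / 4 : ℝ) ≤ x := by
    rw [abs_lt] at hx; linarith
  have hpow : (0 : ℝ) ≤ x ^ (2 * k) := Even.pow_nonneg (even_two_mul k) x
  have hexp : x ^ (2 * k + 1) = x ^ (2 * k) * x := by ring
  rw [hexp]
  have hcat : (0 : ℝ) ≤ (catalan (2 * k) : ℝ) := Nat.cast_nonneg _
  have p1 : (4 * (catalan (2 * k) : ℝ) - (catalan (2 * k + 1) : ℝ)) * x ≤ 0 :=
    mul_nonpos_of_nonneg_of_nonpos (by linarith) hxneg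
  have p2 : (0 : ℝ) ≤ (catalan (2 * k) : ℝ) * (1 + 4 * x) :=
    mul_nonneg hcat (by linarith)
  have hsum : (0 : ℝ) ≤ (catalan (2 * k) : ℝ) + (catalan (2 * k + 1) : ℝ) * x := by
    nlinarith [p1, p2]
  nlinarith [mul_nonneg hpow hsum]

lemma catalan_tsum_quadratic {x : ℝ} (hx : |x| < 1 / 4) :
    (∑' n, (catalan n : ℝ) * x ^ n) =
      1 + x * (∑' n, (catalan n : ℝ) * x ^ n) ^ 2 := by
  have hs := summable_catalan hx
  have hsn : Summable (fun n => ‖(catalan n : ℝ) * x ^ n‖) :=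
    summable_norm_iff.mpr hs
  have cauchy := tsum_mul_tsum_eq_tsum_sum_antidiagonal_of_summable_norm hsn hsn
  have hinner : ∀ n : ℕ, (∑ kl ∈ Finset.HasAntidiagonal.antidiagonal n,
      ((catalan kl.1 : ℝ) * x ^ kl.1) * ((catalan kl.2 : ℝ) * x ^ kl.2)) =
      (catalan (n + 1) : ℝ) * x ^ n := by
    intro n
    have : ∀ kl ∈ Finset.HasAntidiagonal.antidiagonal n,
        ((catalan kl.1 : ℝ) * x ^ kl.1) * ((catalan kl.2 : ℝ) * x ^ kl.2) =
        ((catalan kl.1 * catalan kl.2 : ℕ) : ℝ) * x ^ n := by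
      intro kl hkl
      rw [Finset.HasAntidiagonal.mem_antidiagonal] at hkl
      push_cast
      rw [← hkl]
      ring
    rw [Finset.sum_congr rfl this, ← Finset.sum_mul, ← Nat.cast_sum, ← catalan_succ']
  have hsq : (∑' n, (catalan n : ℝ) * x ^ n) ^ 2 =
      ∑' n, (catalan (n + 1) : ℝ) * x ^ n := by
    rw [sq, cauchy]
    exact tsum_congr hinner
  have hshift : Summable (fun n => (catalan (n + 1) : ℝ) * x ^ (n + 1)) :=
    (summable_nat_add_iff 1).mpr hs
  have hx2 : x * (∑' n, (catalan n : ℝ) * x ^ n) ^ 2 =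
      ∑' n, (catalan (n + 1) : ℝ) * x ^ (n + 1) := by
    rw [hsq, ← tsum_mul_left]
    exact tsum_congr (fun n => by ring)
  rw [hx2, Summable.tsum_eq_zero_add hs]
  simp

lemma catalan_tsum_closed {x : ℝ} (hx : |x| < 1 / 4) (hx0 : x ≠ 0) :
    (∑' n, (catalan n : ℝ) * x ^ n) = (1 - Real.sqrt (1 - 4 * x)) / (2 * x) := by
  set f := ∑' n, (catalan n : ℝ) * x ^ n with hf
  have h1 : f = 1 + x * f ^ 2 := catalan_tsum_quadratic hx
  have habs := abs_lt.mp hx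
  have hlt : 2 * x * f < 1 := by
    rcases lt_or_ge x 0 with hneg | hpos
    · have hfnn : 0 ≤ f := catalan_tsum_nonneg hx hneg.le
      nlinarith
    · have hx0' : 0 < x := lt_of_le_of_ne hpos (Ne.symm hx0)
      have hf2 : f ≤ 2 := catalan_tsum_le_two hpos (by linarith)
      nlinarith
  have hsq : (1 - 2 * x * f) ^ 2 = 1 - 4 * x := by nlinarith [h1]
  have hroot : Real.sqrt (1 - 4 * x) = 1 - 2 * x * f := by
    rw [← hsq, Real.sqrt_sq (by linarith)]
  rw [hroot]
  rw [eq_div_iff (by intro h; exact hx0 (by linarith [mul_eq_zero.mp h]))]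
  ring

theorem catalan_series_closed_form (A B w : ℝ) (hA : A ≠ 0) (hB : B ≠ 0)
    (hw0 : 0 < |w|) (hw : |w| < 1 / (2 * Real.sqrt |A * B|)) :
    (∑' i : ℕ, (catalan i : ℝ) * A ^ (i + 1) * B ^ i * w ^ (2 * i + 1)) =
      (1 - Real.sqrt (1 - 4 * A * B * w ^ 2)) / (2 * B * w) := by
  set x := A * B * w ^ 2 with hxdef
  have hwne : w ≠ 0 := by simpa [abs_pos] using hw0
  have hABne : A * B ≠ 0 := mul_ne_zero hA hB
  have hx0 : x ≠ 0 := mul_ne_zero (mul_ne_zero hA hB) (pow_ne_zero _ hwne)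
  have hsqrtpos : 0 < Real.sqrt |A * B| := Real.sqrt_pos.mpr (abs_pos.mpr hABne)
  have hx : |x| < 1 / 4 := by
    have h1 : |w| * (2 * Real.sqrt |A * B|) < 1 := by
      rw [one_div] at hw
      calc |w| * (2 * Real.sqrt |A * B|)
          < (2 * Real.sqrt |A * B|)⁻¹ * (2 * Real.sqrt |A * B|) := by
            apply mul_lt_mul_of_pos_right hw (by positivity)
        _ = 1 := by field_simp
    have hpn : 0 ≤ |w| * (2 * Real.sqrt |A * B|) := by positivity
    have h2 : (|w| * (2 * Real.sqrt |A * B|)) ^ 2 < 1 := by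
      nlinarith [hpn, h1]
    have h3 : Real.sqrt |A * B| ^ 2 = |A * B| := Real.sq_sqrt (abs_nonneg _)
    have h4 : |x| = |A * B| * |w| ^ 2 := by
      rw [hxdef, abs_mul, abs_pow, sq_abs, ← sq_abs w]
    rw [h4]
    nlinarith [h2, h3]
  have hterm : ∀ i : ℕ, (catalan i : ℝ) * A ^ (i + 1) * B ^ i * w ^ (2 * i + 1) =
      (A * w) * ((catalan i : ℝ) * x ^ i) := by
    intro i
    rw [hxdef, mul_pow, mul_pow, ← pow_mul]
    ring
  rw [tsum_congr hterm, tsum_mul_left, catalan_tsum_closed hx hx0]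
  have h5 : 1 - 4 * x = 1 - 4 * A * B * w ^ 2 := by rw [hxdef]; ring
  rw [h5]
  field_simp [hxdef]
  ring
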